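/- Let π be a probability measure on ℝ with bounded support and m(π) < 0 < M(π) (so −∞ < m(π) and M(π) < ∞), and fix d > 0. Then h(u,d) → +∞ as u → M(π)⁻ and h(u,d) → −∞ as u → m(π)⁺; equivalently, the mean of the tilted measure π^{(γ₁,d)} tends to M(π) as γ₁ → +∞ and to m(π) as γ₁ → −∞. -/

import Mathlib

open MeasureTheory ProbabilityTheory Filter Set
open scoped ENNReal NNReal Topology

/-- The (topological) support of a measure on `ℝ`: points all of whose neighborhoods
have positive measure. -/
def msupp (pr : MeasureTheory.Measure ℝ) : Set ℝ := {x : ℝ | ∀ U ∈ nhds x, pr U ≠ 0}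

/-- The cumulant generating function `c(γ₁, γ₂) = log ∫ exp(γ₁ x - γ₂/2 x²) dπ(x)`. -/
noncomputable def cgf (pr : MeasureTheory.Measure ℝ) (γ₁ γ₂ : ℝ) : ℝ :=
  Real.log (∫ x, Real.exp (γ₁ * x - γ₂ / 2 * x ^ 2) ∂pr)

/-- The exponentially tilted measure `π^{(γ₁, γ₂)}`, with density
`exp(γ₁ x - γ₂/2 x² - c(γ₁,γ₂))` with respect to `π`. -/
noncomputable def tilt (pr : MeasureTheory.Measure ℝ) (γ₁ γ₂ : ℝ) : MeasureTheory.Measure ℝ :=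
  pr.withDensity fun x => ENNReal.ofReal (Real.exp (γ₁ * x - γ₂ / 2 * x ^ 2 - cgf pr γ₁ γ₂))

/-- The mean of the tilted measure `π^{(γ₁, γ₂)}`. -/
noncomputable def tiltMean (pr : MeasureTheory.Measure ℝ) (γ₁ γ₂ : ℝ) : ℝ :=
  ∫ x, x ∂(tilt pr γ₁ γ₂)


lemma msupp_compl_null (pr : MeasureTheory.Measure ℝ) : pr (msupp pr)ᶜ = 0 := by
  apply measure_null_of_locally_null
  intro x hx
  simp only [msupp, mem_compl_iff, mem_setOf_eq, not_forall] at hx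
  obtain ⟨U, hU, hU0⟩ := hx
  exact ⟨U, nhdsWithin_le_nhds hU, not_not.mp hU0⟩

lemma ae_mem_msupp (pr : MeasureTheory.Measure ℝ) : ∀ᵐ x ∂pr, x ∈ msupp pr := by
  have := msupp_compl_null pr
  rw [ae_iff]
  exact this

lemma integ_of_cont (pr : MeasureTheory.Measure ℝ) [IsProbabilityMeasure pr]
    {B : ℝ} (hB : ∀ᵐ x ∂pr, |x| ≤ B) {f : ℝ → ℝ} (hf : Continuous f) :
    Integrable f pr := by
  obtain ⟨C, hC⟩ := (isCompact_Icc (a := -B) (b := B)).exists_bound_of_continuousOn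
    hf.continuousOn
  refine (integrable_const C).mono' hf.aestronglyMeasurable ?_
  filter_upwards [hB] with x hx
  exact hC x (abs_le.mp hx |> fun h => ⟨h.1, h.2⟩)







noncomputable def Zf (pr : MeasureTheory.Measure ℝ) (d γ : ℝ) : ℝ :=
  ∫ x, Real.exp (γ * x - d / 2 * x ^ 2) ∂pr

noncomputable def Nf (pr : MeasureTheory.Measure ℝ) (d γ : ℝ) : ℝ :=
  ∫ x, x * Real.exp (γ * x - d / 2 * x ^ 2) ∂pr

lemma cont_w (d γ : ℝ) : Continuous fun x : ℝ => Real.exp (γ * x - d / 2 * x ^ 2) := by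
  fun_prop

lemma Zf_pos (pr : MeasureTheory.Measure ℝ) [IsProbabilityMeasure pr]
    {B : ℝ} (hB : ∀ᵐ x ∂pr, |x| ≤ B) (d γ : ℝ) : 0 < Zf pr d γ := by
  rw [Zf, integral_pos_iff_support_of_nonneg (fun x => (Real.exp_pos _).le)
    (integ_of_cont pr hB (cont_w d γ))]
  have : (Function.support fun x : ℝ => Real.exp (γ * x - d / 2 * x ^ 2)) = Set.univ := by
    ext x; simp [Function.mem_support, (Real.exp_pos _).ne']
  rw [this]
  simp

lemma tiltMean_eq (pr : MeasureTheory.Measure ℝ) [IsProbabilityMeasure pr]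
    {B : ℝ} (hB : ∀ᵐ x ∂pr, |x| ≤ B) (d γ : ℝ) :
    tiltMean pr γ d = Nf pr d γ / Zf pr d γ := by
  have hZ : 0 < Zf pr d γ := Zf_pos pr hB d γ
  have hmeas : Measurable fun x : ℝ =>
      (Real.exp (γ * x - d / 2 * x ^ 2 - cgf pr γ d)).toNNReal := by
    have hc : Continuous fun x : ℝ => Real.exp (γ * x - d / 2 * x ^ 2 - cgf pr γ d) := by
      fun_prop
    exact hc.measurable.real_toNNReal
  have : tiltMean pr γ d = ∫ x,
      (Real.exp (γ * x - d / 2 * x ^ 2 - cgf pr γ d)).toNNReal • x ∂pr := by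
    rw [tiltMean, tilt]
    rw [show (fun x : ℝ => ENNReal.ofReal (Real.exp (γ * x - d / 2 * x ^ 2 - cgf pr γ d)))
      = (fun x : ℝ => ((Real.exp (γ * x - d / 2 * x ^ 2 - cgf pr γ d)).toNNReal : ℝ≥0∞)) from rfl]
    exact integral_withDensity_eq_integral_smul hmeas _
  rw [this]
  have : ∀ x : ℝ, (Real.exp (γ * x - d / 2 * x ^ 2 - cgf pr γ d)).toNNReal • x
      = (Zf pr d γ)⁻¹ * (x * Real.exp (γ * x - d / 2 * x ^ 2)) := by
    intro x
    have : ((Real.exp (γ * x - d / 2 * x ^ 2 - cgf pr γ d)).toNNReal : ℝ)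
        = Real.exp (γ * x - d / 2 * x ^ 2 - cgf pr γ d) :=
      Real.coe_toNNReal _ (Real.exp_pos _).le
    rw [NNReal.smul_def, smul_eq_mul, this, sub_eq_add_neg (γ * x - d / 2 * x ^ 2),
      Real.exp_add, _root_.cgf]
    rw [Real.exp_neg, show (∫ x : ℝ, Real.exp (γ * x - d / 2 * x ^ 2) ∂pr) = Zf pr d γ from rfl, Real.exp_log hZ]
    ring
  simp_rw [this]
  rw [integral_const_mul, Nf]
  rw [inv_mul_eq_div]

lemma integ_of_cont' (pr : MeasureTheory.Measure ℝ) [IsProbabilityMeasure pr]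
    {B : ℝ} (hB : ∀ᵐ x ∂pr, |x| ≤ B) {f : ℝ → ℝ} (hf : Continuous f) :
    Integrable f pr := integ_of_cont pr hB hf

lemma mean_le (pr : MeasureTheory.Measure ℝ) [IsProbabilityMeasure pr]
    {B M' : ℝ} (hB : ∀ᵐ x ∂pr, |x| ≤ B) (hM : ∀ᵐ x ∂pr, x ≤ M') (d γ : ℝ) :
    Nf pr d γ / Zf pr d γ ≤ M' := by
  have hZ := Zf_pos pr hB d γ
  rw [div_le_iff₀ hZ]
  have : Nf pr d γ ≤ M' * Zf pr d γ := by
    rw [Nf, show M' * Zf pr d γ = ∫ x, M' * Real.exp (γ * x - d / 2 * x ^ 2) ∂pr by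
      rw [Zf, integral_const_mul]]
    refine integral_mono_ae (integ_of_cont pr hB (by fun_prop))
      ((integ_of_cont pr hB (cont_w d γ)).const_mul _) ?_
    filter_upwards [hM] with x hx
    exact mul_le_mul_of_nonneg_right hx (Real.exp_pos _).le
  linarith

lemma mean_ge (pr : MeasureTheory.Measure ℝ) [IsProbabilityMeasure pr]
    {B m' : ℝ} (hB : ∀ᵐ x ∂pr, |x| ≤ B) (hm : ∀ᵐ x ∂pr, m' ≤ x) (d γ : ℝ) :
    m' ≤ Nf pr d γ / Zf pr d γ := by
  have hZ := Zf_pos pr hB d γ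
  rw [le_div_iff₀ hZ]
  have : m' * Zf pr d γ ≤ Nf pr d γ := by
    rw [Nf, show m' * Zf pr d γ = ∫ x, m' * Real.exp (γ * x - d / 2 * x ^ 2) ∂pr by
      rw [Zf, integral_const_mul]]
    refine integral_mono_ae ((integ_of_cont pr hB (cont_w d γ)).const_mul _)
      (integ_of_cont pr hB (by fun_prop)) ?_
    filter_upwards [hm] with x hx
    exact mul_le_mul_of_nonneg_right hx (Real.exp_pos _).le
  linarith

set_option maxHeartbeats 1000000 in
lemma mean_lower_atTop (pr : MeasureTheory.Measure ℝ) [IsProbabilityMeasure pr]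
    {B m' M' d : ℝ} (hB : ∀ᵐ x ∂pr, |x| ≤ B) (hm : ∀ᵐ x ∂pr, m' ≤ x)
    (hM : ∀ᵐ x ∂pr, x ≤ M') (hd : 0 < d) (hmM : m' < M')
    (hsup : ∀ δ > 0, pr (Ioi (M' - δ)) ≠ 0) :
    ∀ ε > 0, ∀ᶠ γ in atTop, M' - 2 * ε ≤ Nf pr d γ / Zf pr d γ := by
  intro ε hε
  set p := (pr (Ioi (M' - ε / 2))).toReal with hp
  have hp0 : 0 < p := ENNReal.toReal_pos (hsup _ (by positivity)) (measure_ne_top _ _)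
  set K := d / 2 * B ^ 2 with hKdef
  have hK0 : 0 ≤ K := by positivity
  set C := M' - m' with hCdef
  have hC0 : 0 < C := by simp [hCdef]; linarith
  set γ₀ := max 0 ((2 / ε) * (2 * K + Real.log (C / (ε * p)))) with hγ₀
  filter_upwards [eventually_ge_atTop γ₀] with γ hγ
  have hγ0 : 0 ≤ γ := le_trans (le_max_left _ _) hγ
  have hZ := Zf_pos pr hB d γ
  -- pointwise a.e. bound
  have key : ∀ᵐ x ∂pr,
      (Ioi (M' - ε / 2)).indicator (fun _ => ε * Real.exp (γ * (M' - ε / 2) - K)) x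
        - C * Real.exp (γ * (M' - ε) + K)
      ≤ (x - (M' - 2 * ε)) * Real.exp (γ * x - d / 2 * x ^ 2) := by
    filter_upwards [hB, hm, hM] with x hxB hxm hxM
    have hx2 : d / 2 * x ^ 2 ≤ K := by
      rw [hKdef]
      have : x ^ 2 ≤ B ^ 2 := sq_le_sq' (by cases abs_le.mp hxB; linarith) (abs_le.mp hxB).2
      nlinarith
    by_cases hx : M' - ε / 2 < x
    · rw [indicator_of_mem (show x ∈ Ioi (M' - ε / 2) from hx)]
      have h1 : ε ≤ x - (M' - 2 * ε) := by linarith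
      have h2 : Real.exp (γ * (M' - ε / 2) - K) ≤ Real.exp (γ * x - d / 2 * x ^ 2) := by
        apply Real.exp_le_exp.mpr
        have : γ * (M' - ε / 2) ≤ γ * x := mul_le_mul_of_nonneg_left hx.le hγ0
        linarith
      have h3 : 0 ≤ C * Real.exp (γ * (M' - ε) + K) := by positivity
      have h4 : ε * Real.exp (γ * (M' - ε / 2) - K)
          ≤ (x - (M' - 2 * ε)) * Real.exp (γ * x - d / 2 * x ^ 2) :=
        mul_le_mul h1 h2 (Real.exp_pos _).le (by linarith)
      exact le_trans (sub_le_self _ h3) h4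
    · rw [indicator_of_notMem (show x ∉ Ioi (M' - ε / 2) from hx), zero_sub]
      push_neg at hx
      by_cases hx' : M' - 2 * ε ≤ x
      · have : 0 ≤ (x - (M' - 2 * ε)) * Real.exp (γ * x - d / 2 * x ^ 2) := by
          apply mul_nonneg (by linarith) (Real.exp_pos _).le
        nlinarith [Real.exp_pos (γ * (M' - ε) + K)]
      · push_neg at hx'
        have hw : Real.exp (γ * x - d / 2 * x ^ 2) ≤ Real.exp (γ * (M' - ε) + K) := by
          apply Real.exp_le_exp.mpr
          have : γ * x ≤ γ * (M' - ε) := mul_le_mul_of_nonneg_left (by linarith) hγ0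
          have : 0 ≤ d / 2 * x ^ 2 := by positivity
          linarith
        have hcoef : 0 ≤ M' - 2 * ε - x := by linarith
        have hcoef2 : M' - 2 * ε - x ≤ C := by rw [hCdef]; linarith
        have := mul_le_mul hcoef2 hw (Real.exp_pos _).le hC0.le
        nlinarith
  -- integrate
  have hint1 : Integrable (fun x => (x - (M' - 2 * ε)) * Real.exp (γ * x - d / 2 * x ^ 2)) pr :=
    integ_of_cont pr hB (by fun_prop)
  have hint2 : Integrable (fun x =>
      (Ioi (M' - ε / 2)).indicator (fun _ => ε * Real.exp (γ * (M' - ε / 2) - K)) x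
        - C * Real.exp (γ * (M' - ε) + K)) pr :=
    ((integrable_const _).indicator measurableSet_Ioi).sub (integrable_const _)
  have hmono := integral_mono_ae hint2 hint1 key
  have hLHS : ∫ x, ((Ioi (M' - ε / 2)).indicator (fun _ => ε * Real.exp (γ * (M' - ε / 2) - K)) x
        - C * Real.exp (γ * (M' - ε) + K)) ∂pr
      = p * (ε * Real.exp (γ * (M' - ε / 2) - K)) - C * Real.exp (γ * (M' - ε) + K) := by
    rw [integral_sub ((integrable_const _).indicator measurableSet_Ioi) (integrable_const _),
      integral_indicator_const _ measurableSet_Ioi, integral_const]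
    simp [hp, measureReal_def]
  have hRHS : ∫ x, (x - (M' - 2 * ε)) * Real.exp (γ * x - d / 2 * x ^ 2) ∂pr
      = Nf pr d γ - (M' - 2 * ε) * Zf pr d γ := by
    have e : ∀ x : ℝ, (x - (M' - 2 * ε)) * Real.exp (γ * x - d / 2 * x ^ 2)
        = x * Real.exp (γ * x - d / 2 * x ^ 2)
          - (M' - 2 * ε) * Real.exp (γ * x - d / 2 * x ^ 2) := fun x => by ring
    simp_rw [e]
    rw [integral_sub (integ_of_cont pr hB (by fun_prop))
      ((integ_of_cont pr hB (cont_w d γ)).const_mul _), integral_const_mul]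
    rfl
  rw [hLHS, hRHS] at hmono
  -- show the LHS is nonnegative
  have hpos : 0 ≤ p * (ε * Real.exp (γ * (M' - ε / 2) - K)) - C * Real.exp (γ * (M' - ε) + K) := by
    have h1 : 2 * K + Real.log (C / (ε * p)) ≤ γ * (ε / 2) := by
      have h2 : (2 / ε) * (2 * K + Real.log (C / (ε * p))) ≤ γ := le_trans (le_max_right _ _) hγ
      have h3 := mul_le_mul_of_nonneg_right h2 (by positivity : (0:ℝ) ≤ ε / 2)
      have : (2 / ε) * (2 * K + Real.log (C / (ε * p))) * (ε / 2)
          = 2 * K + Real.log (C / (ε * p)) := by field_simp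
      linarith
    have h2 : C / (ε * p) ≤ Real.exp (γ * (ε / 2) - 2 * K) := by
      rw [← Real.exp_log (show (0:ℝ) < C / (ε * p) by positivity)]
      exact Real.exp_le_exp.mpr (by linarith)
    have h4 : p * (ε * Real.exp (γ * (M' - ε / 2) - K))
        = (ε * p) * Real.exp (γ * (ε / 2) - 2 * K) * Real.exp (γ * (M' - ε) + K) := by
      rw [mul_assoc, ← Real.exp_add]
      ring_nf
    rw [h4]
    have h5 : C ≤ (ε * p) * Real.exp (γ * (ε / 2) - 2 * K) := by
      have := mul_le_mul_of_nonneg_left h2 (show (0:ℝ) ≤ ε * p by positivity)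
      rwa [mul_div_cancel₀ _ (by positivity : (ε * p) ≠ 0)] at this
    nlinarith [Real.exp_pos (γ * (M' - ε) + K)]
  have : (M' - 2 * ε) * Zf pr d γ ≤ Nf pr d γ := by linarith
  rw [le_div_iff₀ hZ]
  linarith

set_option maxHeartbeats 1000000 in
lemma mean_upper_atBot (pr : MeasureTheory.Measure ℝ) [IsProbabilityMeasure pr]
    {B m' M' d : ℝ} (hB : ∀ᵐ x ∂pr, |x| ≤ B) (hm : ∀ᵐ x ∂pr, m' ≤ x)
    (hM : ∀ᵐ x ∂pr, x ≤ M') (hd : 0 < d) (hmM : m' < M')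
    (hinf : ∀ δ > 0, pr (Iio (m' + δ)) ≠ 0) :
    ∀ ε > 0, ∀ᶠ γ in atBot, Nf pr d γ / Zf pr d γ ≤ m' + 2 * ε := by
  intro ε hε
  set p := (pr (Iio (m' + ε / 2))).toReal with hp
  have hp0 : 0 < p := ENNReal.toReal_pos (hinf _ (by positivity)) (measure_ne_top _ _)
  set K := d / 2 * B ^ 2 with hKdef
  have hK0 : 0 ≤ K := by positivity
  set C := M' - m' with hCdef
  have hC0 : 0 < C := by simp [hCdef]; linarith
  set γ₀ := min 0 (-((2 / ε) * (2 * K + Real.log (C / (ε * p))))) with hγ₀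
  filter_upwards [eventually_le_atBot γ₀] with γ hγ
  have hγ0 : γ ≤ 0 := le_trans hγ (min_le_left _ _)
  have hZ := Zf_pos pr hB d γ
  have key : ∀ᵐ x ∂pr,
      (Iio (m' + ε / 2)).indicator (fun _ => ε * Real.exp (γ * (m' + ε / 2) - K)) x
        - C * Real.exp (γ * (m' + ε) + K)
      ≤ ((m' + 2 * ε) - x) * Real.exp (γ * x - d / 2 * x ^ 2) := by
    filter_upwards [hB, hm, hM] with x hxB hxm hxM
    have hx2 : d / 2 * x ^ 2 ≤ K := by
      rw [hKdef]
      have : x ^ 2 ≤ B ^ 2 := sq_le_sq' (by cases abs_le.mp hxB; linarith) (abs_le.mp hxB).2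
      nlinarith
    by_cases hx : x < m' + ε / 2
    · rw [indicator_of_mem (show x ∈ Iio (m' + ε / 2) from hx)]
      have h1 : ε ≤ (m' + 2 * ε) - x := by linarith
      have h2 : Real.exp (γ * (m' + ε / 2) - K) ≤ Real.exp (γ * x - d / 2 * x ^ 2) := by
        apply Real.exp_le_exp.mpr
        have : γ * (m' + ε / 2) ≤ γ * x := by nlinarith
        linarith
      have h3 : 0 ≤ C * Real.exp (γ * (m' + ε) + K) := by positivity
      have h4 : ε * Real.exp (γ * (m' + ε / 2) - K)
          ≤ ((m' + 2 * ε) - x) * Real.exp (γ * x - d / 2 * x ^ 2) :=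
        mul_le_mul h1 h2 (Real.exp_pos _).le (by linarith)
      exact le_trans (sub_le_self _ h3) h4
    · rw [indicator_of_notMem (show x ∉ Iio (m' + ε / 2) from hx), zero_sub]
      push_neg at hx
      by_cases hx' : x ≤ m' + 2 * ε
      · have : 0 ≤ ((m' + 2 * ε) - x) * Real.exp (γ * x - d / 2 * x ^ 2) := by
          apply mul_nonneg (by linarith) (Real.exp_pos _).le
        nlinarith [Real.exp_pos (γ * (m' + ε) + K)]
      · push_neg at hx'
        have hw : Real.exp (γ * x - d / 2 * x ^ 2) ≤ Real.exp (γ * (m' + ε) + K) := by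
          apply Real.exp_le_exp.mpr
          have : γ * x ≤ γ * (m' + ε) := by nlinarith
          have : 0 ≤ d / 2 * x ^ 2 := by positivity
          linarith
        have hcoef : 0 ≤ x - (m' + 2 * ε) := by linarith
        have hcoef2 : x - (m' + 2 * ε) ≤ C := by rw [hCdef]; linarith
        have := mul_le_mul hcoef2 hw (Real.exp_pos _).le hC0.le
        nlinarith
  have hint1 : Integrable (fun x => ((m' + 2 * ε) - x) * Real.exp (γ * x - d / 2 * x ^ 2)) pr :=
    integ_of_cont pr hB (by fun_prop)
  have hint2 : Integrable (fun x =>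
      (Iio (m' + ε / 2)).indicator (fun _ => ε * Real.exp (γ * (m' + ε / 2) - K)) x
        - C * Real.exp (γ * (m' + ε) + K)) pr :=
    ((integrable_const _).indicator measurableSet_Iio).sub (integrable_const _)
  have hmono := integral_mono_ae hint2 hint1 key
  have hLHS : ∫ x, ((Iio (m' + ε / 2)).indicator (fun _ => ε * Real.exp (γ * (m' + ε / 2) - K)) x
        - C * Real.exp (γ * (m' + ε) + K)) ∂pr
      = p * (ε * Real.exp (γ * (m' + ε / 2) - K)) - C * Real.exp (γ * (m' + ε) + K) := by
    rw [integral_sub ((integrable_const _).indicator measurableSet_Iio) (integrable_const _),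
      integral_indicator_const _ measurableSet_Iio, integral_const]
    simp [hp, measureReal_def]
  have hRHS : ∫ x, ((m' + 2 * ε) - x) * Real.exp (γ * x - d / 2 * x ^ 2) ∂pr
      = (m' + 2 * ε) * Zf pr d γ - Nf pr d γ := by
    have e : ∀ x : ℝ, ((m' + 2 * ε) - x) * Real.exp (γ * x - d / 2 * x ^ 2)
        = (m' + 2 * ε) * Real.exp (γ * x - d / 2 * x ^ 2)
          - x * Real.exp (γ * x - d / 2 * x ^ 2) := fun x => by ring
    simp_rw [e]
    rw [integral_sub ((integ_of_cont pr hB (cont_w d γ)).const_mul _)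
      (integ_of_cont pr hB (by fun_prop)), integral_const_mul]
    rfl
  rw [hLHS, hRHS] at hmono
  have hpos : 0 ≤ p * (ε * Real.exp (γ * (m' + ε / 2) - K)) - C * Real.exp (γ * (m' + ε) + K) := by
    have h1 : 2 * K + Real.log (C / (ε * p)) ≤ -γ * (ε / 2) := by
      have h2 : γ ≤ -((2 / ε) * (2 * K + Real.log (C / (ε * p)))) := le_trans hγ (min_le_right _ _)
      have h3 := mul_le_mul_of_nonneg_right (neg_le_neg h2) (by positivity : (0:ℝ) ≤ ε / 2)
      have : (2 / ε) * (2 * K + Real.log (C / (ε * p))) * (ε / 2)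
          = 2 * K + Real.log (C / (ε * p)) := by field_simp
      rw [neg_neg] at h3
      linarith
    have h2 : C / (ε * p) ≤ Real.exp (-γ * (ε / 2) - 2 * K) := by
      rw [← Real.exp_log (show (0:ℝ) < C / (ε * p) by positivity)]
      exact Real.exp_le_exp.mpr (by linarith)
    have h4 : p * (ε * Real.exp (γ * (m' + ε / 2) - K))
        = (ε * p) * Real.exp (-γ * (ε / 2) - 2 * K) * Real.exp (γ * (m' + ε) + K) := by
      rw [mul_assoc, ← Real.exp_add]
      ring_nf
    rw [h4]
    have h5 : C ≤ (ε * p) * Real.exp (-γ * (ε / 2) - 2 * K) := by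
      have := mul_le_mul_of_nonneg_left h2 (show (0:ℝ) ≤ ε * p by positivity)
      rwa [mul_div_cancel₀ _ (by positivity : (ε * p) ≠ 0)] at this
    nlinarith [Real.exp_pos (γ * (m' + ε) + K)]
  have : Nf pr d γ ≤ (m' + 2 * ε) * Zf pr d γ := by linarith
  rw [div_le_iff₀ hZ]
  linarith

set_option maxHeartbeats 1000000 in
lemma mean_gap_le (pr : MeasureTheory.Measure ℝ) [IsProbabilityMeasure pr]
    {B M' d G γ : ℝ} (hB : ∀ᵐ x ∂pr, |x| ≤ B) (hB0 : 0 ≤ B)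
    (hM : ∀ᵐ x ∂pr, x ≤ M') (hd : 0 < d) (hM0 : 0 < M')
    (hq : pr (Iio 0) ≠ 0) (hG : 0 ≤ G) (hγG : |γ| ≤ G) :
    Nf pr d γ / Zf pr d γ
      ≤ M' - M' * (pr (Iio 0)).toReal * Real.exp (-(2 * G * B) - d * B ^ 2) := by
  set q := (pr (Iio 0)).toReal with hqdef
  have hq0 : 0 < q := ENNReal.toReal_pos hq (measure_ne_top _ _)
  set K := d / 2 * B ^ 2 with hKdef
  have hK0 : 0 ≤ K := by positivity
  have hZ := Zf_pos pr hB d γ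
  -- pointwise bound
  have key : ∀ᵐ x ∂pr,
      (Iio (0:ℝ)).indicator (fun _ => M' * Real.exp (-(G * B) - K)) x
      ≤ (M' - x) * Real.exp (γ * x - d / 2 * x ^ 2) := by
    filter_upwards [hB, hM] with x hxB hxM
    have hx2 : d / 2 * x ^ 2 ≤ K := by
      rw [hKdef]
      have : x ^ 2 ≤ B ^ 2 := sq_le_sq' (by cases abs_le.mp hxB; linarith) (abs_le.mp hxB).2
      nlinarith
    by_cases hx : x < 0
    · rw [indicator_of_mem (show x ∈ Iio (0:ℝ) from hx)]
      have habs : |γ * x| ≤ G * B := by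
        rw [abs_mul]; exact mul_le_mul hγG hxB (abs_nonneg _) hG
      have hgx : -(G * B) ≤ γ * x := by
        have := neg_abs_le (γ * x); linarith [abs_le.mp habs]
      have hw : Real.exp (-(G * B) - K) ≤ Real.exp (γ * x - d / 2 * x ^ 2) := by
        apply Real.exp_le_exp.mpr; linarith
      exact mul_le_mul (by linarith) hw (Real.exp_pos _).le (by linarith)
    · rw [indicator_of_notMem (show x ∉ Iio (0:ℝ) from hx)]
      push_neg at hx
      exact mul_nonneg (by linarith) (Real.exp_pos _).le
  have hint1 : Integrable (fun x => (M' - x) * Real.exp (γ * x - d / 2 * x ^ 2)) pr :=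
    integ_of_cont pr hB (by fun_prop)
  have hmono := integral_mono_ae
    ((integrable_const _).indicator measurableSet_Iio) hint1 key
  rw [integral_indicator_const _ measurableSet_Iio, measureReal_def, ← hqdef] at hmono
  have hRHS : ∫ x, (M' - x) * Real.exp (γ * x - d / 2 * x ^ 2) ∂pr
      = M' * Zf pr d γ - Nf pr d γ := by
    have e : ∀ x : ℝ, (M' - x) * Real.exp (γ * x - d / 2 * x ^ 2)
        = M' * Real.exp (γ * x - d / 2 * x ^ 2)
          - x * Real.exp (γ * x - d / 2 * x ^ 2) := fun x => by ring
    simp_rw [e]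
    rw [integral_sub ((integ_of_cont pr hB (cont_w d γ)).const_mul _)
      (integ_of_cont pr hB (by fun_prop)), integral_const_mul]
    rfl
  rw [hRHS, smul_eq_mul] at hmono
  -- Z upper bound
  have hZle : Zf pr d γ ≤ Real.exp (G * B + K) := by
    rw [Zf, show Real.exp (G * B + K) = ∫ _ : ℝ, Real.exp (G * B + K) ∂pr by
      rw [integral_const]; simp]
    refine integral_mono_ae (integ_of_cont pr hB (cont_w d γ)) (integrable_const _) ?_
    filter_upwards [hB] with x hxB
    apply Real.exp_le_exp.mpr
    have habs : |γ * x| ≤ G * B := by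
      rw [abs_mul]; exact mul_le_mul hγG hxB (abs_nonneg _) hG
    have h1 : γ * x ≤ G * B := le_trans (le_abs_self _) habs
    nlinarith [sq_nonneg x]
  -- combine
  have step : M' * q * Real.exp (-(2 * G * B) - d * B ^ 2) * Zf pr d γ
      ≤ M' * Zf pr d γ - Nf pr d γ := by
    have h1 : M' * q * Real.exp (-(2 * G * B) - d * B ^ 2) * Zf pr d γ
        ≤ M' * q * Real.exp (-(2 * G * B) - d * B ^ 2) * Real.exp (G * B + K) :=
      mul_le_mul_of_nonneg_left hZle (by positivity)
    have h2 : M' * q * Real.exp (-(2 * G * B) - d * B ^ 2) * Real.exp (G * B + K)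
        = q * (M' * Real.exp (-(G * B) - K)) := by
      rw [mul_assoc, ← Real.exp_add, hKdef]
      ring_nf
    linarith [hmono, h1, h2.le, h2.ge]
  rw [div_le_iff₀ hZ]
  nlinarith [step, hZ]

set_option maxHeartbeats 1000000 in
lemma mean_gap_ge (pr : MeasureTheory.Measure ℝ) [IsProbabilityMeasure pr]
    {B m' d G γ : ℝ} (hB : ∀ᵐ x ∂pr, |x| ≤ B) (hB0 : 0 ≤ B)
    (hm : ∀ᵐ x ∂pr, m' ≤ x) (hd : 0 < d) (hm0 : m' < 0)
    (hq : pr (Ioi 0) ≠ 0) (hG : 0 ≤ G) (hγG : |γ| ≤ G) :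
    m' + (-m') * (pr (Ioi 0)).toReal * Real.exp (-(2 * G * B) - d * B ^ 2)
      ≤ Nf pr d γ / Zf pr d γ := by
  set q := (pr (Ioi 0)).toReal with hqdef
  have hq0 : 0 < q := ENNReal.toReal_pos hq (measure_ne_top _ _)
  set K := d / 2 * B ^ 2 with hKdef
  have hK0 : 0 ≤ K := by positivity
  have hZ := Zf_pos pr hB d γ
  have key : ∀ᵐ x ∂pr,
      (Ioi (0:ℝ)).indicator (fun _ => (-m') * Real.exp (-(G * B) - K)) x
      ≤ (x - m') * Real.exp (γ * x - d / 2 * x ^ 2) := by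
    filter_upwards [hB, hm] with x hxB hxm
    have hx2 : d / 2 * x ^ 2 ≤ K := by
      rw [hKdef]
      have : x ^ 2 ≤ B ^ 2 := sq_le_sq' (by cases abs_le.mp hxB; linarith) (abs_le.mp hxB).2
      nlinarith
    by_cases hx : 0 < x
    · rw [indicator_of_mem (show x ∈ Ioi (0:ℝ) from hx)]
      have habs : |γ * x| ≤ G * B := by
        rw [abs_mul]; exact mul_le_mul hγG hxB (abs_nonneg _) hG
      have hgx : -(G * B) ≤ γ * x := by
        have := neg_abs_le (γ * x); linarith [abs_le.mp habs]
      have hw : Real.exp (-(G * B) - K) ≤ Real.exp (γ * x - d / 2 * x ^ 2) := by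
        apply Real.exp_le_exp.mpr; linarith
      exact mul_le_mul (by linarith) hw (Real.exp_pos _).le (by linarith)
    · rw [indicator_of_notMem (show x ∉ Ioi (0:ℝ) from hx)]
      push_neg at hx
      exact mul_nonneg (by linarith) (Real.exp_pos _).le
  have hint1 : Integrable (fun x => (x - m') * Real.exp (γ * x - d / 2 * x ^ 2)) pr :=
    integ_of_cont pr hB (by fun_prop)
  have hmono := integral_mono_ae
    ((integrable_const _).indicator measurableSet_Ioi) hint1 key
  rw [integral_indicator_const _ measurableSet_Ioi, measureReal_def, ← hqdef] at hmono
  have hRHS : ∫ x, (x - m') * Real.exp (γ * x - d / 2 * x ^ 2) ∂pr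
      = Nf pr d γ - m' * Zf pr d γ := by
    have e : ∀ x : ℝ, (x - m') * Real.exp (γ * x - d / 2 * x ^ 2)
        = x * Real.exp (γ * x - d / 2 * x ^ 2)
          - m' * Real.exp (γ * x - d / 2 * x ^ 2) := fun x => by ring
    simp_rw [e]
    rw [integral_sub (integ_of_cont pr hB (by fun_prop))
      ((integ_of_cont pr hB (cont_w d γ)).const_mul _), integral_const_mul]
    rfl
  rw [hRHS, smul_eq_mul] at hmono
  have hZle : Zf pr d γ ≤ Real.exp (G * B + K) := by
    rw [Zf, show Real.exp (G * B + K) = ∫ _ : ℝ, Real.exp (G * B + K) ∂pr by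
      rw [integral_const]; simp]
    refine integral_mono_ae (integ_of_cont pr hB (cont_w d γ)) (integrable_const _) ?_
    filter_upwards [hB] with x hxB
    apply Real.exp_le_exp.mpr
    have habs : |γ * x| ≤ G * B := by
      rw [abs_mul]; exact mul_le_mul hγG hxB (abs_nonneg _) hG
    have h1 : γ * x ≤ G * B := le_trans (le_abs_self _) habs
    nlinarith [sq_nonneg x]
  have step : (-m') * q * Real.exp (-(2 * G * B) - d * B ^ 2) * Zf pr d γ
      ≤ Nf pr d γ - m' * Zf pr d γ := by
    have h1 : (-m') * q * Real.exp (-(2 * G * B) - d * B ^ 2) * Zf pr d γ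
        ≤ (-m') * q * Real.exp (-(2 * G * B) - d * B ^ 2) * Real.exp (G * B + K) :=
      mul_le_mul_of_nonneg_left hZle
        (mul_nonneg (mul_nonneg (by linarith) hq0.le) (Real.exp_pos _).le)
    have h2 : (-m') * q * Real.exp (-(2 * G * B) - d * B ^ 2) * Real.exp (G * B + K)
        = q * ((-m') * Real.exp (-(G * B) - K)) := by
      rw [mul_assoc, ← Real.exp_add, hKdef]
      ring_nf
    linarith [hmono, h1, h2.le, h2.ge]
  rw [le_div_iff₀ hZ]
  nlinarith [step, hZ]

/-- for a probability measure `π` with bounded support and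
`m(π) < 0 < M(π)`, and `d > 0`: `h(u,d) → +∞` as `u → M(π)⁻`, `h(u,d) → −∞` as
`u → m(π)⁺`; equivalently, the mean of `π^{(γ₁,d)}` tends to `M(π)` as `γ₁ → +∞`
and to `m(π)` as `γ₁ → −∞`. -/
theorem stmt13 (pr : Measure ℝ) [IsProbabilityMeasure pr]
    (hbdd : Bornology.IsBounded (msupp pr))
    (hneg : ∃ x ∈ msupp pr, x < 0) (hpos : ∃ x ∈ msupp pr, 0 < x)
    (d : ℝ) (hd : 0 < d)
    (h : ℝ → ℝ)
    (hh : ∀ u ∈ Set.Ioo (sInf (msupp pr)) (sSup (msupp pr)), tiltMean pr (h u) d = u) :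
    Filter.Tendsto h (nhdsWithin (sSup (msupp pr)) (Set.Iio (sSup (msupp pr)))) Filter.atTop ∧
    Filter.Tendsto h (nhdsWithin (sInf (msupp pr)) (Set.Ioi (sInf (msupp pr)))) Filter.atBot ∧
    Filter.Tendsto (fun γ₁ => tiltMean pr γ₁ d) Filter.atTop (nhds (sSup (msupp pr))) ∧
    Filter.Tendsto (fun γ₁ => tiltMean pr γ₁ d) Filter.atBot (nhds (sInf (msupp pr))) := by
  obtain ⟨xn, hxn, hxn0⟩ := hneg
  obtain ⟨xp, hxp, hxp0⟩ := hpos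
  obtain ⟨hbdl, hbda⟩ := isBounded_iff_bddBelow_bddAbove.mp hbdd
  obtain ⟨r, hr⟩ := hbdd.subset_closedBall 0
  set B := max r 0 with hBdef
  have hB0 : (0:ℝ) ≤ B := le_max_right _ _
  have hBmem : ∀ y ∈ msupp pr, |y| ≤ B := by
    intro y hy
    have := hr hy
    rw [Metric.mem_closedBall, Real.dist_eq, sub_zero] at this
    exact le_trans this (le_max_left _ _)
  set m := sInf (msupp pr) with hmdef
  set M := sSup (msupp pr) with hMdef
  have hm0 : m < 0 := lt_of_le_of_lt (csInf_le hbdl hxn) hxn0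
  have hM0 : 0 < M := lt_of_lt_of_le hxp0 (le_csSup hbda hxp)
  have hmM : m < M := lt_trans hm0 hM0
  have hB : ∀ᵐ x ∂pr, |x| ≤ B := by
    filter_upwards [ae_mem_msupp pr] with x hx using hBmem x hx
  have hmae : ∀ᵐ x ∂pr, m ≤ x := by
    filter_upwards [ae_mem_msupp pr] with x hx using csInf_le hbdl hx
  have hMae : ∀ᵐ x ∂pr, x ≤ M := by
    filter_upwards [ae_mem_msupp pr] with x hx using le_csSup hbda hx
  have hsup : ∀ δ > 0, pr (Ioi (M - δ)) ≠ 0 := by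
    intro δ hδ
    obtain ⟨y, hy, hy'⟩ := exists_lt_of_lt_csSup ⟨xn, hxn⟩ (by linarith : M - δ < M)
    exact hy (Ioi (M - δ)) (isOpen_Ioi.mem_nhds hy')
  have hinf : ∀ δ > 0, pr (Iio (m + δ)) ≠ 0 := by
    intro δ hδ
    obtain ⟨y, hy, hy'⟩ := exists_lt_of_csInf_lt ⟨xn, hxn⟩ (by linarith : m < m + δ)
    exact hy (Iio (m + δ)) (isOpen_Iio.mem_nhds hy')
  have hq : pr (Iio 0) ≠ 0 := hxn (Iio 0) (isOpen_Iio.mem_nhds hxn0)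
  have hq' : pr (Ioi 0) ≠ 0 := hxp (Ioi 0) (isOpen_Ioi.mem_nhds hxp0)
  have hTM : ∀ γ, tiltMean pr γ d = Nf pr d γ / Zf pr d γ := fun γ => tiltMean_eq pr hB d γ
  -- Part 3
  have part3 : Tendsto (fun γ₁ => tiltMean pr γ₁ d) atTop (𝓝 M) := by
    rw [Metric.tendsto_nhds]
    intro ε hε
    filter_upwards [mean_lower_atTop pr hB hmae hMae hd hmM hsup (ε / 4) (by linarith)]
      with γ h1
    have h2 := mean_le pr hB hMae d γ
    rw [hTM γ, Real.dist_eq, abs_lt]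
    constructor <;> linarith
  -- Part 4
  have part4 : Tendsto (fun γ₁ => tiltMean pr γ₁ d) atBot (𝓝 m) := by
    rw [Metric.tendsto_nhds]
    intro ε hε
    filter_upwards [mean_upper_atBot pr hB hmae hMae hd hmM hinf (ε / 4) (by linarith)]
      with γ h1
    have h2 := mean_ge pr hB hmae d γ
    rw [hTM γ, Real.dist_eq, abs_lt]
    constructor <;> linarith
  -- Part 1
  have part1 : Tendsto h (𝓝[<] M) atTop := by
    rw [tendsto_atTop]
    intro R
    obtain ⟨γ₁, hγ₁⟩ := eventually_atBot.mp
      (mean_upper_atBot pr hB hmae hMae hd hmM hinf ((M - m) / 4) (by linarith))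
    set G := max |R| |γ₁| with hGdef
    have hG0 : (0:ℝ) ≤ G := le_trans (abs_nonneg R) (le_max_left _ _)
    set q := (pr (Iio 0)).toReal with hqdef
    have hq0 : 0 < q := ENNReal.toReal_pos hq (measure_ne_top _ _)
    set δ := min ((M - m) / 2) (M * q * Real.exp (-(2 * G * B) - d * B ^ 2)) with hδdef
    have hδ0 : 0 < δ := lt_min (by linarith) (by positivity)
    have claim : ∀ γ ≤ R, tiltMean pr γ d ≤ M - δ := by
      intro γ hγR
      rw [hTM γ]
      by_cases hc : γ ≤ γ₁
      · have := hγ₁ γ hc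
        have hδle : δ ≤ (M - m) / 2 := min_le_left _ _
        linarith
      · push_neg at hc
        have hγG : |γ| ≤ G := by
          rw [abs_le]
          constructor
          · have h1 : -|γ₁| ≤ γ₁ := neg_abs_le γ₁
            have h2 : |γ₁| ≤ G := le_max_right _ _
            linarith
          · have h1 : R ≤ |R| := le_abs_self R
            have h2 : |R| ≤ G := le_max_left _ _
            linarith
        have := mean_gap_le pr hB hB0 hMae hd hM0 hq hG0 hγG
        have hδle : δ ≤ M * q * Real.exp (-(2 * G * B) - d * B ^ 2) := min_le_right _ _
        rw [← hqdef] at this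
        linarith
    have hmem : Ioo (max m (M - δ)) M ∈ 𝓝[<] M :=
      Ioo_mem_nhdsLT_of_mem ⟨max_lt hmM (by linarith), le_refl M⟩
    filter_upwards [hmem] with u hu
    have hu1 : m < u := lt_of_le_of_lt (le_max_left _ _) hu.1
    have hu2 : M - δ < u := lt_of_le_of_lt (le_max_right _ _) hu.1
    have hmean := hh u ⟨hu1, hu.2⟩
    by_contra hcon
    push_neg at hcon
    have := claim (h u) hcon.le
    rw [hmean] at this
    linarith
  -- Part 2
  have part2 : Tendsto h (𝓝[>] m) atBot := by
    rw [tendsto_atBot]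
    intro R
    obtain ⟨γ₂, hγ₂⟩ := eventually_atTop.mp
      (mean_lower_atTop pr hB hmae hMae hd hmM hsup ((M - m) / 4) (by linarith))
    set G := max |R| |γ₂| with hGdef
    have hG0 : (0:ℝ) ≤ G := le_trans (abs_nonneg R) (le_max_left _ _)
    set q := (pr (Ioi 0)).toReal with hqdef
    have hq0 : 0 < q := ENNReal.toReal_pos hq' (measure_ne_top _ _)
    set δ := min ((M - m) / 2) ((-m) * q * Real.exp (-(2 * G * B) - d * B ^ 2)) with hδdef
    have hδ0 : 0 < δ := by
      apply lt_min (by linarith)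
      apply mul_pos (mul_pos (by linarith) hq0) (Real.exp_pos _)
    have claim : ∀ γ, R ≤ γ → m + δ ≤ tiltMean pr γ d := by
      intro γ hγR
      rw [hTM γ]
      by_cases hc : γ₂ ≤ γ
      · have := hγ₂ γ hc
        have hδle : δ ≤ (M - m) / 2 := min_le_left _ _
        linarith
      · push_neg at hc
        have hγG : |γ| ≤ G := by
          rw [abs_le]
          constructor
          · have h1 : -|R| ≤ R := neg_abs_le R
            have h2 : |R| ≤ G := le_max_left _ _
            linarith
          · have h1 : γ₂ ≤ |γ₂| := le_abs_self γ₂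
            have h2 : |γ₂| ≤ G := le_max_right _ _
            linarith
        have := mean_gap_ge pr hB hB0 hmae hd hm0 hq' hG0 hγG
        have hδle : δ ≤ (-m) * q * Real.exp (-(2 * G * B) - d * B ^ 2) := min_le_right _ _
        rw [← hqdef] at this
        linarith
    have hmem : Ioo m (min M (m + δ)) ∈ 𝓝[>] m :=
      Ioo_mem_nhdsGT_of_mem ⟨le_refl m, lt_min hmM (by linarith)⟩
    filter_upwards [hmem] with u hu
    have hu1 : u < M := lt_of_lt_of_le hu.2 (min_le_left _ _)
    have hu2 : u < m + δ := lt_of_lt_of_le hu.2 (min_le_right _ _)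
    have hmean := hh u ⟨hu.1, hu1⟩
    by_contra hcon
    push_neg at hcon
    have := claim (h u) hcon.le
    rw [hmean] at this
    linarith
  exact ⟨part1, part2, part3, part4⟩
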